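/- Let C be a finite-dimensional split semisimple K-algebra with a symmetric nondegenerate trace form (c,c') = z(cc') = z(c'c), dual bases (c_i), (c'_i) with (c_i, c'_j) = δ_{ij}. Then for any two simple modules E_u, E_{u'} and any invertible c ∈ C, Σ_i tr(c_i c, E_u) tr(c⁻¹ c'_i, E_{u'}) = δ_{u,u'} f_u dim E_u, where f_u ∈ K* depends only on u (not on the choice of dual bases or of c). -/

import Mathlib

open Module LinearMap

/-- An endomorphism of a finite-dimensional vector space commuting with all endomorphisms
is a scalar. -/
private lemma end_central_scalar {K V : Type*} [Field K] [AddCommGroup V] [Module K V]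
    [FiniteDimensional K V] (g : Module.End K V)
    (hg : ∀ h : Module.End K V, g * h = h * g) :
    ∃ r : K, g = r • (1 : Module.End K V) := by
  classical
  let b := Module.finBasis K V
  let e := LinearMap.toMatrixAlgEquiv b
  have h1 : ∀ N : Matrix (Fin (finrank K V)) (Fin (finrank K V)) K, Commute N (e g) := by
    intro N
    have h2 := hg (e.symm N)
    have h3 := congrArg e h2
    rw [map_mul, map_mul, AlgEquiv.apply_symm_apply] at h3
    exact h3.symm
  obtain ⟨r, hr⟩ := Matrix.mem_range_scalar_of_commute_single
      (M := e g) (fun i j _ => h1 _)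
  refine ⟨r, ?_⟩
  apply e.injective
  rw [← hr]
  have : (Matrix.scalar (Fin (finrank K V))) r = algebraMap K _ r := by
    simp [Matrix.scalar_apply, Matrix.algebraMap_eq_diagonal]
  rw [this, ← e.commutes r, Algebra.algebraMap_eq_smul_one]

/-- 34.14(d): in a split semisimple symmetric algebra with trace form `z` and dual bases
`(c_i), (c'_i)`, for simple modules `E u`, `E u'` and invertible `c`,
`Σ_i tr(c_i c, E u) tr(c⁻¹ c'_i, E u') = δ_{u,u'} f_u dim E_u` with `f_u ∈ K*`
independent of the choices of dual bases and of `c`. -/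
theorem stmt_5 {K C : Type*} [Field K] [Ring C] [Algebra K C] [FiniteDimensional K C]
    {U : Type*} [Fintype U] [DecidableEq U]
    (E : U → Type*) [∀ u, AddCommGroup (E u)] [∀ u, Module K (E u)]
    [∀ u, FiniteDimensional K (E u)] [∀ u, Nontrivial (E u)]
    (ρ : ∀ u, C →ₐ[K] Module.End K (E u))
    (hsplit : Function.Bijective (fun c : C => fun u : U => ρ u c))
    (z : C →ₗ[K] K) (hz : ∀ x y : C, z (x * y) = z (y * x))
    (hnd : ∀ x : C, (∀ y : C, z (x * y) = 0) → x = 0) :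
    ∃ f : U → K, (∀ u, f u ≠ 0) ∧
      ∀ (ι : Type) [Fintype ι] [DecidableEq ι] (b : Basis ι K C) (b' : ι → C),
        (∀ i j : ι, z (b i * b' j) = if i = j then 1 else 0) →
        ∀ (c : Cˣ) (u u' : U),
          (∑ i : ι, LinearMap.trace K (E u) (ρ u (b i * (c : C))) *
              LinearMap.trace K (E u') (ρ u' (((c⁻¹ : Cˣ) : C) * b' i))) =
            (if u = u' then (1 : K) else 0) * f u * (Module.finrank K (E u) : K) := by
  classical
  -- the trace functionals
  set T : U → (C →ₗ[K] K) := fun u => (LinearMap.trace K (E u)) ∘ₗ (ρ u).toLinearMap with hT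
  have hTapp : ∀ u (x : C), T u x = LinearMap.trace K (E u) (ρ u x) := fun _ _ => rfl
  -- the pairing map into the dual
  set Φ : C →ₗ[K] Module.Dual K C := ((LinearMap.mul K C).compr₂ z).flip with hΦ
  have hΦapp : ∀ d x : C, Φ d x = z (x * d) := fun _ _ => rfl
  have Φinj : Function.Injective Φ := by
    rw [← LinearMap.ker_eq_bot, LinearMap.ker_eq_bot']
    intro d hd
    apply hnd
    intro y
    rw [hz]
    have := LinearMap.congr_fun hd y
    simpa [hΦapp] using this
  have Φsurj : Function.Surjective Φ :=
    (LinearMap.injective_iff_surjective_of_finrank_eq_finrank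
      (Subspace.dual_finrank_eq (V := C)).symm).mp Φinj
  -- the dual elements d u with z (x * d u) = tr (ρ u x)
  choose d hd using fun u => Φsurj (T u)
  have hdz : ∀ u (x : C), z (x * d u) = LinearMap.trace K (E u) (ρ u x) := by
    intro u x
    have := LinearMap.congr_fun (hd u) x
    simpa [hΦapp, hTapp] using this
  have huniq : ∀ (u : U) (s : C),
      (∀ x, z (x * s) = LinearMap.trace K (E u) (ρ u x)) → s = d u := by
    intro u s hs
    apply Φinj
    rw [hd u]
    ext x
    rw [hΦapp, hTapp, hs x]
  -- d u is central
  have hcomm : ∀ (u : U) (a : C), a * d u = d u * a := by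
    intro u a
    apply Φinj
    ext x
    rw [hΦapp, hΦapp, ← mul_assoc, hdz]
    have h1 : z (x * (d u * a)) = z ((a * x) * d u) := by
      rw [← mul_assoc, hz, ← mul_assoc]
    rw [h1, hdz, map_mul (ρ u) x a, map_mul (ρ u) a x, LinearMap.trace_mul_comm]
  -- each ρ u' is surjective
  have hρsurj : ∀ (u' : U) (g : Module.End K (E u')), ∃ x : C, ρ u' x = g := by
    intro u' g
    obtain ⟨x, hx⟩ := hsplit.2 (Pi.single u' g)
    refine ⟨x, ?_⟩
    have := congrFun hx u'
    simpa using this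
  -- ρ u' (d u) is a scalar
  have hscal : ∀ u u' : U, ∃ r : K, ρ u' (d u) = r • (1 : Module.End K (E u')) := by
    intro u u'
    apply end_central_scalar
    intro h
    obtain ⟨x, rfl⟩ := hρsurj u' h
    rw [← map_mul, ← map_mul, hcomm]
  -- ρ u' (d u) = 0 for u ≠ u'
  have hzero : ∀ u u' : U, u ≠ u' → ρ u' (d u) = 0 := by
    intro u u' hne
    obtain ⟨e, he⟩ := hsplit.2 (Pi.single u' (1 : Module.End K (E u')))
    have he' : ρ u' e = 1 := by simpa using congrFun he u'
    have heu : ρ u e = 0 := by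
      have := congrFun he u
      simpa [Pi.single_eq_of_ne hne] using this
    have hde : d u * e = 0 := by
      apply hnd
      intro y
      rw [mul_assoc, hz, hdz, map_mul, heu, zero_mul, map_zero]
    calc ρ u' (d u) = ρ u' (d u) * ρ u' e := by rw [he', mul_one]
      _ = ρ u' (d u * e) := (map_mul _ _ _).symm
      _ = 0 := by rw [hde, map_zero]
  -- the scalars f u
  choose f hf using fun u => hscal u u
  have hfne : ∀ u, f u ≠ 0 := by
    intro u h0
    have hdu : d u = 0 := by
      apply hsplit.1
      funext w
      show ρ w (d u) = ρ w 0
      by_cases hw : w = u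
      · rw [hw, hf u, h0, zero_smul, map_zero]
      · rw [hzero u w (fun h => hw h.symm), map_zero]
    -- find an element of trace one
    obtain ⟨g, hg⟩ : ∃ g : Module.End K (E u), LinearMap.trace K (E u) g = 1 := by
      have hpos : 0 < finrank K (E u) := finrank_pos
      let bu := Module.finBasis K (E u)
      let i : Fin (finrank K (E u)) := ⟨0, hpos⟩
      refine ⟨(LinearMap.toMatrixAlgEquiv bu).symm (Matrix.single i i 1), ?_⟩
      rw [LinearMap.trace_eq_matrix_trace K bu]
      have : LinearMap.toMatrix bu bu ((LinearMap.toMatrixAlgEquiv bu).symm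
          (Matrix.single i i 1)) = Matrix.single i i 1 :=
        (LinearMap.toMatrixAlgEquiv bu).apply_symm_apply _
      rw [this, Matrix.trace_single_eq_same]
    obtain ⟨x, hx⟩ := hρsurj u g
    have h1 : (0 : K) = 1 := by
      have h2 := hdz u x
      rw [hdu, mul_zero, map_zero, hx, hg] at h2
      exact h2
    exact zero_ne_one h1
  refine ⟨f, hfne, ?_⟩
  intro ι _ _ b b' hbb c u u'
  set cc : C := (c : C) with hcc
  set ci : C := ((c⁻¹ : Cˣ) : C) with hci
  have hcic : ci * cc = 1 := by
    rw [hci, hcc]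
    exact_mod_cast c.inv_mul
  -- expansion in the basis b
  have hexp : ∀ y : C, y = ∑ i, z (y * b' i) • b i := by
    intro y
    have hco : ∀ j, z (y * b' j) = b.repr y j := by
      intro j
      conv_lhs => rw [← b.sum_repr y]
      rw [Finset.sum_mul, map_sum]
      simp only [smul_mul_assoc, map_smul, hbb, smul_eq_mul, mul_ite, mul_one, mul_zero]
      simp
    calc y = ∑ i, b.repr y i • b i := (b.sum_repr y).symm
      _ = ∑ i, z (y * b' i) • b i := by
          refine Finset.sum_congr rfl fun i _ => ?_
          rw [hco]
  -- the candidate element equals d u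
  set S : C := ∑ i, LinearMap.trace K (E u) (ρ u (b i * cc)) • (ci * b' i) with hS
  have hSd : S = d u := by
    apply huniq
    intro x
    have hx : x = ∑ i, z ((x * ci) * b' i) • (b i * cc) := by
      calc x = (x * ci) * cc := by rw [mul_assoc, hcic, mul_one]
        _ = (∑ i, z ((x * ci) * b' i) • b i) * cc := by conv_lhs => rw [hexp (x * ci)]
        _ = ∑ i, z ((x * ci) * b' i) • (b i * cc) := by rw [Finset.sum_mul]; simp [smul_mul_assoc]
    calc z (x * S)
        = ∑ i, LinearMap.trace K (E u) (ρ u (b i * cc)) * z (x * (ci * b' i)) := by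
          rw [hS, Finset.mul_sum, map_sum]
          refine Finset.sum_congr rfl fun i _ => ?_
          rw [mul_smul_comm, map_smul, smul_eq_mul]
      _ = ∑ i, z ((x * ci) * b' i) * LinearMap.trace K (E u) (ρ u (b i * cc)) := by
          refine Finset.sum_congr rfl fun i _ => ?_
          rw [← mul_assoc, mul_comm]
      _ = LinearMap.trace K (E u) (ρ u x) := by
          conv_rhs => rw [hx]
          rw [map_sum, map_sum]
          refine Finset.sum_congr rfl fun i _ => ?_
          rw [map_smul, map_smul, smul_eq_mul]
  -- conclude
  have hmain : (∑ i : ι, LinearMap.trace K (E u) (ρ u (b i * cc)) *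
      LinearMap.trace K (E u') (ρ u' (ci * b' i)))
      = LinearMap.trace K (E u') (ρ u' (d u)) := by
    rw [← hSd, hS, map_sum, map_sum]
    refine Finset.sum_congr rfl fun i _ => ?_
    rw [map_smul, map_smul, smul_eq_mul]
  rw [hmain]
  by_cases huu : u = u'
  · subst huu
    rw [hf u, map_smul, LinearMap.trace_one, smul_eq_mul, if_pos rfl, one_mul]
  · rw [hzero u u' huu, map_zero, if_neg huu, zero_mul, zero_mul]
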